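/- Let A be an n×n real strictly lower triangular matrix and D an n×n real diagonal matrix with strictly positive diagonal entries. Then C̃ := (I − A)⁻¹ D (I − A)⁻ᵀ is symmetric positive definite. In particular, the nearest-neighbor Gaussian process induces a valid (positive definite) covariance matrix on any finite set of inputs. -/

import Mathlib

open Matrix

lemma posDef_mul_mul_conjTranspose {n : ℕ} {M B : Matrix (Fin n) (Fin n) ℝ}
    (hM : M.PosDef) (hB : IsUnit B.det) : (B * M * Bᴴ).PosDef := by
  refine PosDef.of_dotProduct_mulVec_pos ?_ ?_
  · exact isHermitian_mul_mul_conjTranspose B hM.1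
  · intro x hx
    have hxB : Bᴴ *ᵥ x ≠ 0 := by
      intro h
      apply hx
      have hBH : IsUnit (Bᴴ).det := by
        simpa [det_conjTranspose] using hB.star
      have h2 := congrArg (fun v => (Bᴴ)⁻¹ *ᵥ v) h
      simp only [mulVec_mulVec, nonsing_inv_mul _ hBH, one_mulVec, mulVec_zero] at h2
      exact h2
    have := hM.dotProduct_mulVec_pos (x := Bᴴ *ᵥ x) hxB
    simpa only [star_mulVec, dotProduct_mulVec, vecMul_vecMul,
      conjTranspose_conjTranspose] using this

/-- the NNGP induces a valid covariance matrix: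
`C̃ = (I − A)⁻¹ D (I − A)⁻ᵀ` is symmetric positive definite when `A` is strictly lower
triangular and `D` is diagonal with strictly positive diagonal entries. -/
theorem nngp_covariance_posDef {n : ℕ}
    (A : Matrix (Fin n) (Fin n) ℝ) (hA : ∀ i j : Fin n, i ≤ j → A i j = 0)
    (d : Fin n → ℝ) (hd : ∀ i, 0 < d i)
    (Ctilde : Matrix (Fin n) (Fin n) ℝ)
    (hC : Ctilde = (1 - A)⁻¹ * Matrix.diagonal d * ((1 - A)ᵀ)⁻¹) :
    Ctilde.PosDef := by
  have hdet : (1 - A).det = 1 := by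
    have hbt : (1 - A).BlockTriangular OrderDual.toDual := by
      intro i j hij
      have hij' : (i : Fin n) < j := hij
      simp [Matrix.sub_apply, Matrix.one_apply, hij'.ne,
        hA i j hij'.le]
    rw [Matrix.det_of_lowerTriangular _ hbt]
    have : ∀ i : Fin n, (1 - A) i i = 1 := by
      intro i; simp [Matrix.sub_apply, Matrix.one_apply, hA i i le_rfl]
    simp [this]
  have hunit : IsUnit (1 - A).det := by rw [hdet]; exact isUnit_one
  have hinvunit : IsUnit ((1 - A)⁻¹).det := isUnit_nonsing_inv_det _ hunit
  have hD : (Matrix.diagonal d).PosDef := Matrix.posDef_diagonal_iff.mpr hd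
  rw [hC, ← transpose_nonsing_inv]
  have : ((1 - A)⁻¹)ᵀ = ((1 - A)⁻¹)ᴴ := by
    ext i j; simp [conjTranspose_apply]
  rw [this]
  exact posDef_mul_mul_conjTranspose hD hinvunit
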